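/- Let K be a reflexive Gorenstein cone of index r with complete splitting E∨ = {e₁∨,…,e_r∨} of K∨. Then each set Δ̃_i = {k ∈ K ∩ M̄ | e_i∨(k) = 1, e_j∨(k) = 0 for j ≠ i} is nonempty. -/

import Mathlib

open scoped BigOperators

/-- Cast a lattice vector to a real vector. -/
def castR {ι : Type*} (m : ι → ℤ) : ι → ℝ := fun i => (m i : ℝ)

/-- The cone generated by a finite family of real vectors. -/
def coneGenR {V : Type*} [AddCommGroup V] [Module ℝ V] {k : ℕ} (g : Fin k → V) : Set V :=
  {x | ∃ c : Fin k → ℝ, (∀ i, 0 ≤ c i) ∧ x = ∑ i, c i • g i}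

/-- The integral pairing on the lattice `M̄ = ι → ℤ` and its dual. -/
def pairZ {ι : Type*} [Fintype ι] (m n : ι → ℤ) : ℤ := ∑ i, m i * n i

/-- The dual cone of `K ⊆ M̄_ℝ`, inside `N̄_ℝ` (identified with `ι → ℝ` via the
standard pairing). -/
def dualConeR {ι : Type*} [Fintype ι] (K : Set (ι → ℝ)) : Set (ι → ℝ) :=
  {n | ∀ m ∈ K, 0 ≤ ∑ i, m i * n i}

/-- The lattice points of a cone. -/
def latt {ι : Type*} [Fintype ι] (K : Set (ι → ℝ)) : Set (ι → ℤ) :=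
  {m | castR m ∈ K}

/-- A reflexive Gorenstein cone `K ⊆ M̄_ℝ`, with distinguished lattice points
`ℓ ∈ K ∩ M̄` and `ℓ∨ ∈ K∨ ∩ N̄`: `K` is full-dimensional rational polyhedral, the monoid
of lattice points of `K` is generated by those on which `ℓ∨` takes the value `1`, and
dually for `K∨` and `ℓ`. -/
structure RefGor (ι : Type*) [Fintype ι] where
  K : Set (ι → ℝ)
  poly : ∃ (k : ℕ) (g : Fin k → ι → ℤ), K = coneGenR fun i => castR (g i)
  fulldim : Submodule.span ℝ K = ⊤
  l : ι → ℤ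
  lv : ι → ℤ
  l_mem : l ∈ latt K
  lv_mem : lv ∈ latt (dualConeR K)
  genK : ∀ m ∈ latt K,
    m ∈ AddSubmonoid.closure {m' | m' ∈ latt K ∧ pairZ m' lv = 1}
  genKv : ∀ n ∈ latt (dualConeR K),
    n ∈ AddSubmonoid.closure {n' | n' ∈ latt (dualConeR K) ∧ pairZ l n' = 1}

/-- The lattice points of the support `Δ̃ = {k ∈ K | ℓ∨(k) = 1}`. -/
def RefGor.DeltaL {ι : Type*} [Fintype ι] (G : RefGor ι) : Set (ι → ℤ) :=
  {m | m ∈ latt G.K ∧ pairZ m G.lv = 1}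

/-- The lattice points of `Δ̃_i = {k ∈ K | e_i∨(k) = 1, e_j∨(k) = 0 for j ≠ i}`. -/
def RefGor.DeltaI {ι : Type*} [Fintype ι] (G : RefGor ι) {r : ℕ}
    (e : Fin r → ι → ℤ) (i : Fin r) : Set (ι → ℤ) :=
  {m | m ∈ latt G.K ∧ pairZ m (e i) = 1 ∧ ∀ j, j ≠ i → pairZ m (e j) = 0}

/-- A complete splitting `E∨ = {e₁∨, …, e_r∨}` of the dual cone `K∨`: nonzero lattice
points of `K∨` summing to `ℓ∨`. -/
def RefGor.IsDualSplitting {ι : Type*} [Fintype ι] (G : RefGor ι) {r : ℕ}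
    (e : Fin r → ι → ℤ) : Prop :=
  (∀ i, e i ≠ 0 ∧ e i ∈ latt (dualConeR G.K)) ∧ ∑ i, e i = G.lv

lemma pairZ_add_left {ι : Type*} [Fintype ι] (m m' n : ι → ℤ) :
    pairZ (m + m') n = pairZ m n + pairZ m' n := by
  simp [pairZ, add_mul, Finset.sum_add_distrib]

lemma pairZ_zero_left {ι : Type*} [Fintype ι] (n : ι → ℤ) : pairZ 0 n = 0 := by
  simp [pairZ]

lemma pairZ_sum_right {ι : Type*} [Fintype ι] {r : ℕ} (m : ι → ℤ) (e : Fin r → ι → ℤ) :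
    pairZ m (∑ j, e j) = ∑ j, pairZ m (e j) := by
  simp only [pairZ, Finset.sum_apply, Finset.mul_sum]
  exact Finset.sum_comm

lemma pairZ_nonneg {ι : Type*} [Fintype ι] {K : Set (ι → ℝ)} {m n : ι → ℤ}
    (hm : m ∈ latt K) (hn : n ∈ latt (dualConeR K)) : 0 ≤ pairZ m n := by
  have h := hn (castR m) hm
  simp only [castR] at h
  have h2 : (0:ℝ) ≤ ((pairZ m n : ℤ) : ℝ) := by
    unfold pairZ; push_cast; exact h
  exact_mod_cast h2

/-- Each set `Δ̃_i` is nonempty. -/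
theorem stmt3 {ι : Type*} [Fintype ι] (G : RefGor ι) (r : ℕ)
    (hr : pairZ G.l G.lv = r) (e : Fin r → ι → ℤ) (he : G.IsDualSplitting e) :
    ∀ i, (G.DeltaI e i).Nonempty := by
  classical
  intro i
  obtain ⟨hne, hsum⟩ := he
  by_contra hempty
  rw [Set.not_nonempty_iff_eq_empty] at hempty
  -- Every generator in Δ̃ pairs to 0 with e i
  have hS0 : ∀ m' ∈ {m' | m' ∈ latt G.K ∧ pairZ m' G.lv = 1}, pairZ m' (e i) = 0 := by
    rintro m' ⟨hm'K, hm'1⟩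
    have hnn : ∀ j, 0 ≤ pairZ m' (e j) := fun j => pairZ_nonneg hm'K (hne j).2
    have hsum1 : ∑ j, pairZ m' (e j) = 1 := by
      rw [← pairZ_sum_right, hsum, hm'1]
    by_contra h0
    have h1 : 1 ≤ pairZ m' (e i) := lt_of_le_of_ne (hnn i) (Ne.symm h0)
    have hsplit : pairZ m' (e i) + ∑ j ∈ Finset.univ.erase i, pairZ m' (e j) = 1 := by
      have h := Finset.add_sum_erase Finset.univ (fun j => pairZ m' (e j))
        (Finset.mem_univ i)
      exact h.trans hsum1
    have hrest_nonneg : 0 ≤ ∑ j ∈ Finset.univ.erase i, pairZ m' (e j) :=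
      Finset.sum_nonneg fun j _ => hnn j
    have hi1 : pairZ m' (e i) = 1 := by omega
    have hrest0 : ∑ j ∈ Finset.univ.erase i, pairZ m' (e j) = 0 := by omega
    have hj0 : ∀ j, j ≠ i → pairZ m' (e j) = 0 := by
      intro j hj
      exact (Finset.sum_eq_zero_iff_of_nonneg fun j _ => hnn j).mp hrest0 j
        (Finset.mem_erase.mpr ⟨hj, Finset.mem_univ j⟩)
    have hmem : m' ∈ G.DeltaI e i := ⟨hm'K, hi1, hj0⟩
    rw [hempty] at hmem
    exact hmem
  -- There is a lattice point of K pairing positively with e i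
  obtain ⟨k, g, hK⟩ := G.poly
  have hg_mem : ∀ j, g j ∈ latt G.K := by
    intro j
    show castR (g j) ∈ G.K
    rw [hK]
    refine ⟨fun t => if t = j then 1 else 0, fun t => by positivity, ?_⟩
    simp
  have key : ∃ m ∈ latt G.K, pairZ m (e i) ≠ 0 := by
    by_contra hall
    push_neg at hall
    apply (hne i).1
    -- the linear functional ⟨·, e i⟩ vanishes on K, hence everywhere
    let f : (ι → ℝ) →ₗ[ℝ] ℝ :=
      { toFun := fun x => ∑ t, x t * castR (e i) t
        map_add' := by intro x y; simp [add_mul, Finset.sum_add_distrib]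
        map_smul' := by intro c x; simp [Finset.mul_sum, mul_assoc] }
    have hfg : ∀ j, f (castR (g j)) = 0 := by
      intro j
      have h0 : pairZ (g j) (e i) = 0 := hall (g j) (hg_mem j)
      have : ((pairZ (g j) (e i) : ℤ) : ℝ) = f (castR (g j)) := by
        unfold pairZ; push_cast; rfl
      rw [h0] at this
      exact_mod_cast this.symm
    have hKker : G.K ⊆ (LinearMap.ker f : Set (ι → ℝ)) := by
      intro x hx
      rw [hK] at hx
      obtain ⟨c, _, rfl⟩ := hx
      simp only [SetLike.mem_coe, LinearMap.mem_ker, map_sum, map_smul]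
      simp [hfg]
    have hker : (LinearMap.ker f : Submodule ℝ (ι → ℝ)) = ⊤ := by
      rw [← top_le_iff, ← G.fulldim]
      exact Submodule.span_le.mpr hKker
    funext t
    have ht : f (Pi.single t 1) = 0 := by
      have : Pi.single t 1 ∈ LinearMap.ker f := by rw [hker]; trivial
      exact this
    have : ((e i t : ℤ) : ℝ) = 0 := by
      have hval : f (Pi.single t 1) = castR (e i) t := by
        have : f (Pi.single t 1) = ∑ s, (Pi.single t (1:ℝ) : ι → ℝ) s * castR (e i) s := rfl
        rw [this, Finset.sum_eq_single t]
        · simp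
        · intro b _ hb; simp [Pi.single_eq_of_ne hb]
        · intro h; exact absurd (Finset.mem_univ t) h
      rw [hval] at ht
      exact ht
    exact_mod_cast this
  obtain ⟨m, hmK, hm_ne⟩ := key
  have hcl0 : ∀ x ∈ AddSubmonoid.closure {m' | m' ∈ latt G.K ∧ pairZ m' G.lv = 1},
      pairZ x (e i) = 0 := by
    intro x hx
    induction hx using AddSubmonoid.closure_induction with
    | mem z hz => exact hS0 z hz
    | zero => exact pairZ_zero_left _
    | add z w _ _ hz hw => rw [pairZ_add_left, hz, hw]; ring
  exact hm_ne (hcl0 m (G.genK m hmK))
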